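/- Let F be a propositional formula over a finite set of atoms and I an interpretation. Then the reduct of the choice formula F ∨ ¬F relative to I is classically equivalent to the reduct of F relative to I when I ⊨ F, and is equivalent to ⊤ (a tautology satisfied by every interpretation) when I ⊭ F. Consequently, I is a stable model of the conjunction ⋀_{i ∈ ι} (F_i ∨ ¬F_i) iff I is a stable model of ⋀_{i : I ⊨ F_i} F_i. -/

import Mathlib

inductive PropForm (α : Type) : Type
  | atom : α → PropForm α
  | fals : PropForm α
  | conj : PropForm α → PropForm α → PropForm α
  | disj : PropForm α → PropForm α → PropForm α
  | impl : PropForm α → PropForm α → PropForm α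

namespace PropForm

/-- Classical satisfaction of a propositional formula by an interpretation. -/
def Sat {α : Type} (I : α → Prop) : PropForm α → Prop
  | atom a => I a
  | fals => False
  | conj F G => Sat I F ∧ Sat I G
  | disj F G => Sat I F ∨ Sat I G
  | impl F G => Sat I F → Sat I G

open Classical in
/-- The Ferraris reduct F^I: replace maximal subformulas not satisfied by I with ⊥. -/
noncomputable def reduct {α : Type} (I : α → Prop) : PropForm α → PropForm α
  | atom a => if I a then atom a else fals
  | fals => fals
  | conj F G => if Sat I (conj F G) then conj (reduct I F) (reduct I G) else fals
  | disj F G => if Sat I (disj F G) then disj (reduct I F) (reduct I G) else fals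
  | impl F G => if Sat I (impl F G) then impl (reduct I F) (reduct I G) else fals

def neg {α : Type} (F : PropForm α) : PropForm α := impl F fals

/-- The choice formula {F}^ch = F ∨ ¬F. -/
def choice {α : Type} (F : PropForm α) : PropForm α := disj F (neg F)

def top {α : Type} : PropForm α := impl fals fals

def bigConj {α : Type} (l : List (PropForm α)) : PropForm α := l.foldr conj top

/-- I is a stable model of F: I is a minimal model of the reduct F^I. -/
noncomputable def StableModel {α : Type} (I : α → Prop) (F : PropForm α) : Prop :=
  Sat I (reduct I F) ∧
    ∀ J : α → Prop, (∀ a, J a → I a) → Sat J (reduct I F) → ∀ a, I a → J a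

end PropForm

namespace PropForm

theorem reduct_of_not_sat {α : Type} {I : α → Prop} {G : PropForm α}
    (h : ¬ Sat I G) : reduct I G = fals := by
  cases G with
  | atom a => simp [Sat] at h; simp [reduct, h]
  | fals => simp [reduct]
  | conj F G => simp [reduct, h]
  | disj F G => simp [reduct, h]
  | impl F G => simp [reduct, h]

theorem sat_reduct_choice_of_sat {α : Type} {I : α → Prop} {G : PropForm α}
    (h : Sat I G) (J : α → Prop) :
    Sat J (reduct I (choice G)) ↔ Sat J (reduct I G) := by
  have h1 : Sat I (disj G (neg G)) := Or.inl h
  have h2 : ¬ Sat I (neg G) := fun hn => hn h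
  rw [choice, reduct, if_pos h1, reduct_of_not_sat h2]
  simp [Sat]

theorem sat_reduct_choice_of_not_sat {α : Type} {I : α → Prop} {G : PropForm α}
    (h : ¬ Sat I G) (J : α → Prop) :
    Sat J (reduct I (choice G)) := by
  have h1 : Sat I (disj G (neg G)) := Or.inr h
  rw [choice, reduct, if_pos h1, reduct_of_not_sat h]
  right
  rw [neg, reduct, if_pos (show Sat I (impl G fals) from fun hg => absurd hg h),
    reduct_of_not_sat h]
  simp [Sat, reduct]

theorem sat_bigConj {α : Type} {I : α → Prop} {l : List (PropForm α)} :
    Sat I (bigConj l) ↔ ∀ G ∈ l, Sat I G := by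
  induction l with
  | nil => simp [bigConj, top, Sat]
  | cons G l ih =>
    simp only [bigConj, List.foldr] at ih ⊢
    simp [Sat, ih, List.forall_mem_cons]

theorem sat_reduct_bigConj {α : Type} {I : α → Prop} {l : List (PropForm α)}
    (h : ∀ G ∈ l, Sat I G) (J : α → Prop) :
    Sat J (reduct I (bigConj l)) ↔ ∀ G ∈ l, Sat J (reduct I G) := by
  induction l with
  | nil =>
    simp only [bigConj, List.foldr, top]
    rw [reduct, if_pos (show Sat I (impl fals fals) from id)]
    simp [Sat, reduct]
  | cons G l ih =>
    have hG : Sat I G := h G List.mem_cons_self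
    have hl : ∀ G ∈ l, Sat I G := fun G hG' => h G (List.mem_cons_of_mem _ hG')
    have hc : Sat I (conj G (bigConj l)) := ⟨hG, sat_bigConj.mpr hl⟩
    show Sat J (reduct I (conj G (bigConj l))) ↔ _
    rw [reduct, if_pos hc]
    simp only [Sat, ih hl, List.mem_cons]
    constructor
    · rintro ⟨h1, h2⟩ G' (rfl | hm)
      · exact h1
      · exact h2 _ hm
    · intro h'
      exact ⟨h' _ (Or.inl rfl), fun G' hm => h' _ (Or.inr hm)⟩

end PropForm


open PropForm in
open scoped Classical in
theorem stmt_13 {α ι : Type} [Fintype ι] (F : ι → PropForm α) (I : α → Prop) :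
    (∀ G : PropForm α, Sat I G →
      ∀ J : α → Prop, (Sat J (reduct I (choice G)) ↔ Sat J (reduct I G))) ∧
    (∀ G : PropForm α, ¬ Sat I G → ∀ J : α → Prop, Sat J (reduct I (choice G))) ∧
    (StableModel I (bigConj ((Finset.univ : Finset ι).toList.map (fun i => choice (F i)))) ↔
      StableModel I
        (bigConj (((Finset.univ : Finset ι).filter (fun i => Sat I (F i))).toList.map F))) := by

  classical
  have part1 := fun (G : PropForm α) (h : Sat I G) (J : α → Prop) =>
    sat_reduct_choice_of_sat h J
  have part2 := fun (G : PropForm α) (h : ¬ Sat I G) (J : α → Prop) =>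
    sat_reduct_choice_of_not_sat h J
  refine ⟨part1, part2, ?_⟩
  set l1 := ((Finset.univ : Finset ι).toList.map (fun i => choice (F i))) with hl1
  set l2 := (((Finset.univ : Finset ι).filter (fun i => Sat I (F i))).toList.map F) with hl2
  have hs1 : ∀ G ∈ l1, Sat I G := by
    intro G hG
    simp only [hl1, List.mem_map] at hG
    obtain ⟨i, _, rfl⟩ := hG
    by_cases h : Sat I (F i)
    · exact Or.inl h
    · exact Or.inr h
  have hs2 : ∀ G ∈ l2, Sat I G := by
    intro G hG
    simp only [hl2, List.mem_map, Finset.mem_toList, Finset.mem_filter] at hG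
    obtain ⟨i, ⟨_, hi⟩, rfl⟩ := hG
    exact hi
  have key : ∀ J : α → Prop, Sat J (reduct I (bigConj l1)) ↔ Sat J (reduct I (bigConj l2)) := by
    intro J
    rw [sat_reduct_bigConj hs1 J, sat_reduct_bigConj hs2 J]
    constructor
    · intro h G hG
      simp only [hl2, List.mem_map, Finset.mem_toList, Finset.mem_filter] at hG
      obtain ⟨i, ⟨_, hi⟩, rfl⟩ := hG
      have := h (choice (F i)) (by simp [hl1])
      exact (part1 (F i) hi J).mp this
    · intro h G hG
      simp only [hl1, List.mem_map] at hG
      obtain ⟨i, _, rfl⟩ := hG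
      by_cases hi : Sat I (F i)
      · refine (part1 (F i) hi J).mpr (h (F i) ?_)
        simp only [hl2, List.mem_map, Finset.mem_toList, Finset.mem_filter]
        exact ⟨i, ⟨Finset.mem_univ i, hi⟩, rfl⟩
      · exact part2 (F i) hi J
  unfold StableModel
  rw [key I]
  constructor
  · rintro ⟨h1, h2⟩
    exact ⟨h1, fun J hJ hsat => h2 J hJ ((key J).mpr hsat)⟩
  · rintro ⟨h1, h2⟩
    exact ⟨h1, fun J hJ hsat => h2 J hJ ((key J).mp hsat)⟩
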